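/- Let a be a parameter and let x, y satisfy y² + (a + 1)·(x² − 1)·(3·x⁴ + 3·(a − 1)·x² + a² − a + 1) = 0 with x² ≠ 1. Define u = −(x² + a)/(x² − 1) and v = y/(x² − 1)². Then u³ + 1 = v²; that is, (u, v) lies on the elliptic curve v² = u³ + 1 (which has j-invariant 0). -/

import Mathlib

/-- The degree-2 morphism from the genus-two curve
`y² + (a+1)(x²−1)(3x⁴ + 3(a−1)x² + a² − a + 1) = 0` to the elliptic curve `v² = u³ + 1`. -/
theorem genus_two_to_j_zero (a x y : ℂ) (hx : x ^ 2 ≠ 1)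
    (hcurve : y ^ 2 + (a + 1) * (x ^ 2 - 1) *
      (3 * x ^ 4 + 3 * (a - 1) * x ^ 2 + a ^ 2 - a + 1) = 0) :
    let u : ℂ := -(x ^ 2 + a) / (x ^ 2 - 1)
    let v : ℂ := y / (x ^ 2 - 1) ^ 2
    u ^ 3 + 1 = v ^ 2 := by
  intro u v
  have h : x ^ 2 - 1 ≠ 0 := sub_ne_zero.mpr hx
  show (-(x ^ 2 + a) / (x ^ 2 - 1)) ^ 3 + 1 = (y / (x ^ 2 - 1) ^ 2) ^ 2
  field_simp
  linear_combination (-1 : ℂ) * hcurve
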